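/- Let ρ1 ∈ D_{n1} and ρ2 ∈ D_{n2} be density matrices with max{rank(ρ1), rank(ρ2)} ≤ k ≤ rank(ρ1) + rank(ρ2) − 1 for an integer k. Then there exists ρ ∈ S(ρ1,ρ2) with rank(ρ) = k. -/

import Mathlib

open Matrix Kronecker Finset
open scoped ComplexOrder

/-- Partial trace over the first subsystem: `tr_1(ρ) = Σ_j ρ_{jj} ∈ M_{n2}`. -/
noncomputable def trace1 {n1 n2 : ℕ} (ρ : Matrix (Fin n1 × Fin n2) (Fin n1 × Fin n2) ℂ) :
    Matrix (Fin n2) (Fin n2) ℂ :=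
  Matrix.of fun i j => ∑ k : Fin n1, ρ (k, i) (k, j)

/-- Partial trace over the second subsystem: `tr_2(ρ) = (tr ρ_{ij})_{ij} ∈ M_{n1}`. -/
noncomputable def trace2 {n1 n2 : ℕ} (ρ : Matrix (Fin n1 × Fin n2) (Fin n1 × Fin n2) ℂ) :
    Matrix (Fin n1) (Fin n1) ℂ :=
  Matrix.of fun i j => ∑ k : Fin n2, ρ (i, k) (j, k)

lemma kron_conjT {l m p q : Type*} (A : Matrix l m ℂ) (B : Matrix p q ℂ) :
    (A ⊗ₖ B)ᴴ = Aᴴ ⊗ₖ Bᴴ := by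
  ext ⟨i, j⟩ ⟨a, b⟩
  simp [conjTranspose_apply, star_mul', mul_comm]

lemma trace_stdE {n : ℕ} (M : Matrix (Fin n) (Fin n) ℂ) (i j : Fin n) :
    (single j i 1 * M).trace = M i j := by
  simp [Matrix.trace, Matrix.diag, mul_apply, single, ite_and, Finset.sum_ite_eq]

lemma trace_kron_left {n1 n2 : ℕ} (B : Matrix (Fin n1) (Fin n1) ℂ)
    (A : Matrix (Fin n1 × Fin n2) (Fin n1 × Fin n2) ℂ) :
    ((B ⊗ₖ (1 : Matrix (Fin n2) (Fin n2) ℂ)) * A).trace = (B * trace2 A).trace := by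
  simp only [Matrix.trace, Matrix.diag, mul_apply, kroneckerMap_apply, trace2, of_apply,
    one_apply, Fintype.sum_prod_type]
  simp only [mul_ite, mul_one, mul_zero, ite_mul, zero_mul, Finset.sum_ite_eq,
    Finset.sum_ite_eq', Finset.mem_univ, if_true, Finset.mul_sum]
  exact Finset.sum_congr rfl fun x _ => Finset.sum_comm

lemma trace_kron_right {n1 n2 : ℕ} (B : Matrix (Fin n2) (Fin n2) ℂ)
    (A : Matrix (Fin n1 × Fin n2) (Fin n1 × Fin n2) ℂ) :
    (((1 : Matrix (Fin n1) (Fin n1) ℂ) ⊗ₖ B) * A).trace = (B * trace1 A).trace := by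
  simp only [Matrix.trace, Matrix.diag, mul_apply, kroneckerMap_apply, trace1, of_apply,
    one_apply, Fintype.sum_prod_type]
  simp only [mul_ite, mul_one, mul_zero, ite_mul, zero_mul, one_mul, Finset.sum_ite_eq,
    Finset.sum_ite_eq', Finset.mem_univ, if_true, Finset.mul_sum]
  have h1 : ∀ (x : Fin n1) (x1 : Fin n2),
      (∑ x2 : Fin n1, ∑ x3 : Fin n2, if x = x2 then B x1 x3 * A (x2, x3) (x, x1) else 0)
        = ∑ x3 : Fin n2, B x1 x3 * A (x, x3) (x, x1) := by
    intro x x1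
    rw [Finset.sum_comm]
    simp [Finset.sum_ite_eq]
  rw [Finset.sum_congr rfl fun x _ => Finset.sum_congr rfl fun x1 _ => h1 x x1,
    Finset.sum_comm]
  exact Finset.sum_congr rfl fun x1 _ => Finset.sum_comm

lemma trace_conj_aux {N : Type*} [Fintype N] (P V A W : Matrix N N ℂ) :
    (P * (V * A * W)).trace = (W * P * V * A).trace := by
  rw [show P * (V * A * W) = (P * V * A) * W by simp only [mul_assoc], trace_mul_comm,
    show W * (P * V * A) = W * P * V * A by simp only [mul_assoc]]

lemma trace2_conj {n1 n2 : ℕ} (U1 : Matrix (Fin n1) (Fin n1) ℂ) (U2 : Matrix (Fin n2) (Fin n2) ℂ)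
    (hU1 : U1ᴴ * U1 = 1) (hU2 : U2ᴴ * U2 = 1)
    (A : Matrix (Fin n1 × Fin n2) (Fin n1 × Fin n2) ℂ) :
    trace2 ((U1 ⊗ₖ U2) * A * (U1 ⊗ₖ U2)ᴴ) = U1 * trace2 A * U1ᴴ := by
  ext i j
  have key : (U1 ⊗ₖ U2)ᴴ * ((single j i 1) ⊗ₖ (1 : Matrix (Fin n2) (Fin n2) ℂ))
      * (U1 ⊗ₖ U2) = (U1ᴴ * single j i 1 * U1) ⊗ₖ (1 : Matrix (Fin n2) (Fin n2) ℂ) := by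
    rw [kron_conjT, ← mul_kronecker_mul, ← mul_kronecker_mul, Matrix.mul_one, hU2]
  calc trace2 ((U1 ⊗ₖ U2) * A * (U1 ⊗ₖ U2)ᴴ) i j
      = ((single j i 1) * trace2 ((U1 ⊗ₖ U2) * A * (U1 ⊗ₖ U2)ᴴ)).trace :=
        (trace_stdE _ i j).symm
    _ = (((single j i 1) ⊗ₖ (1 : Matrix (Fin n2) (Fin n2) ℂ))
          * ((U1 ⊗ₖ U2) * A * (U1 ⊗ₖ U2)ᴴ)).trace := (trace_kron_left _ _).symm
    _ = ((U1 ⊗ₖ U2)ᴴ * ((single j i 1) ⊗ₖ (1 : Matrix (Fin n2) (Fin n2) ℂ))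
          * (U1 ⊗ₖ U2) * A).trace := trace_conj_aux _ _ _ _
    _ = (((U1ᴴ * single j i 1 * U1) ⊗ₖ (1 : Matrix (Fin n2) (Fin n2) ℂ)) * A).trace := by
        rw [key]
    _ = ((U1ᴴ * single j i 1 * U1) * trace2 A).trace := trace_kron_left _ _
    _ = (single j i 1 * (U1 * trace2 A * U1ᴴ)).trace := by
        rw [show (U1ᴴ * single j i 1 * U1) * trace2 A
            = U1ᴴ * (single j i 1 * (U1 * trace2 A)) by simp only [mul_assoc],
          trace_mul_comm,
          show single j i 1 * (U1 * trace2 A) * U1ᴴ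
            = single j i 1 * (U1 * trace2 A * U1ᴴ) by simp only [mul_assoc]]
    _ = (U1 * trace2 A * U1ᴴ) i j := trace_stdE _ i j

lemma trace1_conj {n1 n2 : ℕ} (U1 : Matrix (Fin n1) (Fin n1) ℂ) (U2 : Matrix (Fin n2) (Fin n2) ℂ)
    (hU1 : U1ᴴ * U1 = 1) (hU2 : U2ᴴ * U2 = 1)
    (A : Matrix (Fin n1 × Fin n2) (Fin n1 × Fin n2) ℂ) :
    trace1 ((U1 ⊗ₖ U2) * A * (U1 ⊗ₖ U2)ᴴ) = U2 * trace1 A * U2ᴴ := by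
  ext i j
  have key : (U1 ⊗ₖ U2)ᴴ * ((1 : Matrix (Fin n1) (Fin n1) ℂ) ⊗ₖ (single j i 1))
      * (U1 ⊗ₖ U2) = (1 : Matrix (Fin n1) (Fin n1) ℂ) ⊗ₖ (U2ᴴ * single j i 1 * U2) := by
    rw [kron_conjT, ← mul_kronecker_mul, ← mul_kronecker_mul, Matrix.mul_one, hU1]
  calc trace1 ((U1 ⊗ₖ U2) * A * (U1 ⊗ₖ U2)ᴴ) i j
      = ((single j i 1) * trace1 ((U1 ⊗ₖ U2) * A * (U1 ⊗ₖ U2)ᴴ)).trace :=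
        (trace_stdE _ i j).symm
    _ = (((1 : Matrix (Fin n1) (Fin n1) ℂ) ⊗ₖ (single j i 1))
          * ((U1 ⊗ₖ U2) * A * (U1 ⊗ₖ U2)ᴴ)).trace := (trace_kron_right _ _).symm
    _ = ((U1 ⊗ₖ U2)ᴴ * ((1 : Matrix (Fin n1) (Fin n1) ℂ) ⊗ₖ (single j i 1))
          * (U1 ⊗ₖ U2) * A).trace := trace_conj_aux _ _ _ _
    _ = (((1 : Matrix (Fin n1) (Fin n1) ℂ) ⊗ₖ (U2ᴴ * single j i 1 * U2)) * A).trace := by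
        rw [key]
    _ = ((U2ᴴ * single j i 1 * U2) * trace1 A).trace := trace_kron_right _ _
    _ = (single j i 1 * (U2 * trace1 A * U2ᴴ)).trace := by
        rw [show (U2ᴴ * single j i 1 * U2) * trace1 A
            = U2ᴴ * (single j i 1 * (U2 * trace1 A)) by simp only [mul_assoc],
          trace_mul_comm,
          show single j i 1 * (U2 * trace1 A) * U2ᴴ
            = single j i 1 * (U2 * trace1 A * U2ᴴ) by simp only [mul_assoc]]
    _ = (U2 * trace1 A * U2ᴴ) i j := trace_stdE _ i j

lemma sum_ite_ite {k : ℕ} (x y : Fin k) (s t : ℂ) :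
    (∑ m : Fin k, (if x = m then s else 0) * (if y = m then t else 0))
      = if x = y then s * t else 0 := by
  by_cases h : x = y
  · subst h
    rw [if_pos rfl, Finset.sum_eq_single x]
    · simp
    · intro m _ hm; simp [Ne.symm hm]
    · simp
  · rw [if_neg h, Finset.sum_eq_zero]
    intro m _
    by_cases h1 : x = m <;> by_cases h2 : y = m <;> simp_all

/-- The core construction for diagonal marginals. -/
lemma core {n1 n2 r1 r2 : ℕ} (p : Fin n1 → ℝ) (q : Fin n2 → ℝ)
    (hp : ∀ i, 0 ≤ p i) (hq : ∀ j, 0 ≤ q j)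
    (hp1 : ∑ i, p i = 1) (hq1 : ∑ j, q j = 1)
    (e1 : {i // p i ≠ 0} ≃ Fin r1) (e2 : {j // q j ≠ 0} ≃ Fin r2)
    (k : ℕ) (hr1k : r1 ≤ k) (hr2k : r2 ≤ k) (hk2 : k ≤ r1 + r2 - 1) :
    ∃ ρ : Matrix (Fin n1 × Fin n2) (Fin n1 × Fin n2) ℂ,
      ρ.PosSemidef ∧ ρ.trace = 1 ∧
      trace2 ρ = diagonal (fun i => (p i : ℂ)) ∧
      trace1 ρ = diagonal (fun j => (q j : ℂ)) ∧ ρ.rank = k := by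
  classical
  obtain ⟨i0, hi0⟩ : ∃ i, p i ≠ 0 := by
    by_contra h; push_neg at h
    rw [Finset.sum_congr rfl fun i _ => h i] at hp1; simp at hp1
  obtain ⟨j0, hj0⟩ : ∃ j, q j ≠ 0 := by
    by_contra h; push_neg at h
    rw [Finset.sum_congr rfl fun j _ => h j] at hq1; simp at hq1
  have hr1pos : 0 < r1 := (e1 ⟨i0, hi0⟩).pos
  have hr2pos : 0 < r2 := (e2 ⟨j0, hj0⟩).pos
  have hkpos : 0 < k := lt_of_lt_of_le hr1pos hr1k
  set φ1 : Fin n1 → ℕ := fun a => if h : p a ≠ 0 then (e1 ⟨a, h⟩ : ℕ) else 0 with hφ1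
  set φ2 : Fin n2 → ℕ := fun b => if h : q b ≠ 0 then (e2 ⟨b, h⟩ : ℕ) else 0 with hφ2
  have hφ1lt : ∀ a, p a ≠ 0 → φ1 a < r1 := by
    intro a h; simp only [hφ1, dif_pos h]; exact (e1 ⟨a, h⟩).isLt
  have hφ2lt : ∀ b, q b ≠ 0 → φ2 b < r2 := by
    intro b h; simp only [hφ2, dif_pos h]; exact (e2 ⟨b, h⟩).isLt
  have hφ1inj : ∀ a a', p a ≠ 0 → p a' ≠ 0 → φ1 a = φ1 a' → a = a' := by
    intro a a' h h' hee
    simp only [hφ1, dif_pos h, dif_pos h'] at hee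
    have := e1.injective (Fin.val_injective hee)
    exact congrArg Subtype.val this
  have hφ2inj : ∀ b b', q b ≠ 0 → q b' ≠ 0 → φ2 b = φ2 b' → b = b' := by
    intro b b' h h' hee
    simp only [hφ2, dif_pos h, dif_pos h'] at hee
    have := e2.injective (Fin.val_injective hee)
    exact congrArg Subtype.val this
  set c : Fin n1 → Fin n2 → Fin k := fun a b => ⟨(φ1 a + φ2 b) % k, Nat.mod_lt _ hkpos⟩ with hc
  set W : Matrix (Fin n1 × Fin n2) (Fin k) ℂ :=
    Matrix.of (fun ab m =>
      if c ab.1 ab.2 = m then ((Real.sqrt (p ab.1 * q ab.2) : ℝ) : ℂ) else 0) with hWdef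
  have hsq : ∀ (a : Fin n1) (b : Fin n2),
      ((Real.sqrt (p a * q b) : ℝ) : ℂ) * ((Real.sqrt (p a * q b) : ℝ) : ℂ)
        = ((p a * q b : ℝ) : ℂ) := by
    intro a b
    rw [← Complex.ofReal_mul, Real.mul_self_sqrt (mul_nonneg (hp a) (hq b))]
  have hWW : ∀ ab ab' : Fin n1 × Fin n2, (W * Wᴴ) ab ab' =
      if c ab.1 ab.2 = c ab'.1 ab'.2 then
        ((Real.sqrt (p ab.1 * q ab.2) : ℝ) : ℂ) * ((Real.sqrt (p ab'.1 * q ab'.2) : ℝ) : ℂ)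
      else 0 := by
    intro ab ab'
    have : ∀ m : Fin k, W ab m * (Wᴴ) m ab'
        = (if c ab.1 ab.2 = m then ((Real.sqrt (p ab.1 * q ab.2) : ℝ) : ℂ) else 0)
          * (if c ab'.1 ab'.2 = m then ((Real.sqrt (p ab'.1 * q ab'.2) : ℝ) : ℂ) else 0) := by
      intro m
      simp only [hWdef, conjTranspose_apply, of_apply, apply_ite (star ·), star_zero,
        Complex.star_def, Complex.conj_ofReal]
    rw [mul_apply, Finset.sum_congr rfl fun m _ => this m, sum_ite_ite]
  refine ⟨W * Wᴴ, Matrix.posSemidef_self_mul_conjTranspose W, ?_, ?_, ?_, ?_⟩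
  · -- trace
    have : (W * Wᴴ).trace = ∑ ab : Fin n1 × Fin n2, ((p ab.1 * q ab.2 : ℝ) : ℂ) := by
      rw [Matrix.trace]
      refine Finset.sum_congr rfl fun ab _ => ?_
      rw [Matrix.diag_apply, hWW, if_pos rfl, hsq]
    rw [this]
    have hr : (∑ ab : Fin n1 × Fin n2, (p ab.1 * q ab.2 : ℝ)) = 1 := by
      rw [Fintype.sum_prod_type, ← Finset.sum_mul_sum, hp1, hq1, one_mul]
    rw [← Complex.ofReal_sum, hr, Complex.ofReal_one]
  · -- trace2
    ext a a'
    simp only [trace2, of_apply]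
    rcases eq_or_ne a a' with rfl | haa
    · rw [diagonal_apply_eq]
      have : ∀ b : Fin n2, (W * Wᴴ) (a, b) (a, b) = ((p a * q b : ℝ) : ℂ) := by
        intro b; rw [hWW, if_pos rfl, hsq]
      rw [Finset.sum_congr rfl fun b _ => this b]
      have : (∑ b : Fin n2, (p a * q b : ℝ)) = p a := by
        rw [← Finset.mul_sum, hq1, mul_one]
      rw [← Complex.ofReal_sum, this]
    · rw [diagonal_apply_ne _ haa]
      refine Finset.sum_eq_zero fun b _ => ?_
      rw [hWW]
      rcases eq_or_ne (p a) 0 with h1 | h1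
      · simp [h1]
      rcases eq_or_ne (p a') 0 with h2 | h2
      · simp [h2]
      rcases eq_or_ne (q b) 0 with h3 | h3
      · simp [h3]
      rw [if_neg]
      intro hcc
      have hmod : (φ1 a + φ2 b) % k = (φ1 a' + φ2 b) % k := by
        simpa [hc, Fin.ext_iff] using hcc
      have h4 : φ1 a % k = φ1 a' % k := Nat.ModEq.add_right_cancel' (φ2 b) hmod
      rw [Nat.mod_eq_of_lt (lt_of_lt_of_le (hφ1lt a h1) hr1k),
        Nat.mod_eq_of_lt (lt_of_lt_of_le (hφ1lt a' h2) hr1k)] at h4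
      exact haa (hφ1inj a a' h1 h2 h4)
  · -- trace1
    ext b b'
    simp only [trace1, of_apply]
    rcases eq_or_ne b b' with rfl | hbb
    · rw [diagonal_apply_eq]
      have : ∀ a : Fin n1, (W * Wᴴ) (a, b) (a, b) = ((p a * q b : ℝ) : ℂ) := by
        intro a; rw [hWW, if_pos rfl, hsq]
      rw [Finset.sum_congr rfl fun a _ => this a]
      have : (∑ a : Fin n1, (p a * q b : ℝ)) = q b := by
        rw [← Finset.sum_mul, hp1, one_mul]
      rw [← Complex.ofReal_sum, this]
    · rw [diagonal_apply_ne _ hbb]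
      refine Finset.sum_eq_zero fun a _ => ?_
      rw [hWW]
      rcases eq_or_ne (q b) 0 with h1 | h1
      · simp [h1]
      rcases eq_or_ne (q b') 0 with h2 | h2
      · simp [h2]
      rcases eq_or_ne (p a) 0 with h3 | h3
      · simp [h3]
      rw [if_neg]
      intro hcc
      have hmod : (φ1 a + φ2 b) % k = (φ1 a + φ2 b') % k := by
        simpa [hc, Fin.ext_iff] using hcc
      have h4 : φ2 b % k = φ2 b' % k := Nat.ModEq.add_left_cancel' (φ1 a) hmod
      rw [Nat.mod_eq_of_lt (lt_of_lt_of_le (hφ2lt b h1) hr2k),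
        Nat.mod_eq_of_lt (lt_of_lt_of_le (hφ2lt b' h2) hr2k)] at h4
      exact hbb (hφ2inj b b' h1 h2 h4)
  · -- rank
    rw [Matrix.rank_self_mul_conjTranspose, ← Matrix.rank_conjTranspose_mul_self]
    set d : Fin k → ℝ :=
      fun m => ∑ ab : Fin n1 × Fin n2, (if c ab.1 ab.2 = m then p ab.1 * q ab.2 else 0) with hd
    have hWTW : Wᴴ * W = diagonal (fun m => ((d m : ℝ) : ℂ)) := by
      ext m m'
      rw [mul_apply]
      have hterm : ∀ ab : Fin n1 × Fin n2, (Wᴴ) m ab * W ab m'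
          = if c ab.1 ab.2 = m ∧ c ab.1 ab.2 = m' then ((p ab.1 * q ab.2 : ℝ) : ℂ) else 0 := by
        intro ab
        simp only [hWdef, conjTranspose_apply, of_apply, apply_ite (star ·), star_zero,
          Complex.star_def, Complex.conj_ofReal]
        by_cases h1 : c ab.1 ab.2 = m <;> by_cases h2 : c ab.1 ab.2 = m' <;>
          simp [h1, h2, hsq ab.1 ab.2]
      rw [Finset.sum_congr rfl fun ab _ => hterm ab]
      rcases eq_or_ne m m' with rfl | hmm
      · rw [diagonal_apply_eq, hd, Complex.ofReal_sum]
        refine Finset.sum_congr rfl fun ab _ => ?_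
        by_cases h : c ab.1 ab.2 = m <;> simp [h]
      · rw [diagonal_apply_ne _ hmm]
        refine Finset.sum_eq_zero fun ab _ => ?_
        rw [if_neg]
        rintro ⟨h1, h2⟩
        exact hmm (h1 ▸ h2)
    rw [hWTW, Matrix.rank_diagonal]
    have hall : ∀ m : Fin k, ((d m : ℝ) : ℂ) ≠ 0 := by
      intro m
      rw [Ne, Complex.ofReal_eq_zero]
      refine ne_of_gt ?_
      -- find witness (a, b) with c a b = m and p a * q b > 0
      have hm2 : (m : ℕ) < k := m.isLt
      set i : ℕ := min (m : ℕ) (r1 - 1) with hi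
      set j : ℕ := (m : ℕ) - i with hj
      have hir : i < r1 := by omega
      have hjr : j < r2 := by omega
      have hij : i + j = (m : ℕ) := by omega
      set a : Fin n1 := (e1.symm ⟨i, hir⟩).1 with ha
      set b : Fin n2 := (e2.symm ⟨j, hjr⟩).1 with hb
      have hpa : p a ≠ 0 := (e1.symm ⟨i, hir⟩).2
      have hqb : q b ≠ 0 := (e2.symm ⟨j, hjr⟩).2
      have hφa : φ1 a = i := by
        simp only [hφ1, dif_pos hpa]
        have : (⟨a, hpa⟩ : {i // p i ≠ 0}) = e1.symm ⟨i, hir⟩ := Subtype.ext rfl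
        rw [this, Equiv.apply_symm_apply]
      have hφb : φ2 b = j := by
        simp only [hφ2, dif_pos hqb]
        have : (⟨b, hqb⟩ : {j // q j ≠ 0}) = e2.symm ⟨j, hjr⟩ := Subtype.ext rfl
        rw [this, Equiv.apply_symm_apply]
      have hcab : c a b = m := by
        rw [hc]
        apply Fin.ext
        simp only [hφa, hφb, hij]
        exact Nat.mod_eq_of_lt hm2
      rw [hd]
      refine Finset.sum_pos' (fun ab _ => ?_) ⟨(a, b), Finset.mem_univ _, ?_⟩
      · by_cases h : c ab.1 ab.2 = m
        · rw [if_pos h]; exact mul_nonneg (hp ab.1) (hq ab.2)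
        · rw [if_neg h]
      · simp only [hcab, if_pos]
        exact mul_pos ((hp a).lt_of_ne (Ne.symm hpa)) ((hq b).lt_of_ne (Ne.symm hqb))
    calc Fintype.card {m : Fin k // ((d m : ℝ) : ℂ) ≠ 0}
        = Fintype.card (Fin k) := Fintype.card_congr (Equiv.subtypeUnivEquiv hall)
      _ = k := Fintype.card_fin k

/-- For any `k` with `max{rank ρ1, rank ρ2} ≤ k ≤ rank ρ1 + rank ρ2 − 1` there is a state
in `S(ρ1, ρ2)` of rank exactly `k`. -/
theorem stmt4 {n1 n2 : ℕ}
    (ρ1 : Matrix (Fin n1) (Fin n1) ℂ) (ρ2 : Matrix (Fin n2) (Fin n2) ℂ)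
    (hρ1 : ρ1.PosSemidef) (hρ1tr : ρ1.trace = 1)
    (hρ2 : ρ2.PosSemidef) (hρ2tr : ρ2.trace = 1)
    (k : ℕ) (hk1 : max ρ1.rank ρ2.rank ≤ k) (hk2 : k ≤ ρ1.rank + ρ2.rank - 1) :
    ∃ ρ : Matrix (Fin n1 × Fin n2) (Fin n1 × Fin n2) ℂ,
      ρ.PosSemidef ∧ ρ.trace = 1 ∧ trace2 ρ = ρ1 ∧ trace1 ρ = ρ2 ∧ ρ.rank = k := by
  classical
  have hH1 := hρ1.1
  have hH2 := hρ2.1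
  set U1 : Matrix (Fin n1) (Fin n1) ℂ := (hH1.eigenvectorUnitary : Matrix (Fin n1) (Fin n1) ℂ)
    with hU1def
  set U2 : Matrix (Fin n2) (Fin n2) ℂ := (hH2.eigenvectorUnitary : Matrix (Fin n2) (Fin n2) ℂ)
    with hU2def
  set p : Fin n1 → ℝ := hH1.eigenvalues with hpdef
  set q : Fin n2 → ℝ := hH2.eigenvalues with hqdef
  have hU1 : U1ᴴ * U1 = 1 := by
    rw [hU1def, ← Matrix.star_eq_conjTranspose]
    exact Matrix.mem_unitaryGroup_iff'.mp (hH1.eigenvectorUnitary).2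
  have hU2 : U2ᴴ * U2 = 1 := by
    rw [hU2def, ← Matrix.star_eq_conjTranspose]
    exact Matrix.mem_unitaryGroup_iff'.mp (hH2.eigenvectorUnitary).2
  have hU1' : U1 * U1ᴴ = 1 := by
    rw [hU1def, ← Matrix.star_eq_conjTranspose]
    exact Matrix.mem_unitaryGroup_iff.mp (hH1.eigenvectorUnitary).2
  have hU2' : U2 * U2ᴴ = 1 := by
    rw [hU2def, ← Matrix.star_eq_conjTranspose]
    exact Matrix.mem_unitaryGroup_iff.mp (hH2.eigenvectorUnitary).2
  have hspec1 : ρ1 = U1 * diagonal (fun i => (p i : ℂ)) * U1ᴴ := by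
    have := hH1.spectral_theorem
    rw [Unitary.conjStarAlgAut_apply, Matrix.star_eq_conjTranspose] at this
    exact this
  have hspec2 : ρ2 = U2 * diagonal (fun j => (q j : ℂ)) * U2ᴴ := by
    have := hH2.spectral_theorem
    rw [Unitary.conjStarAlgAut_apply, Matrix.star_eq_conjTranspose] at this
    exact this
  have hp1 : ∑ i, p i = 1 := by
    have h1 : (diagonal (fun i => (p i : ℂ))).trace = 1 := by
      rw [show diagonal (fun i => (p i : ℂ)) = U1ᴴ * ρ1 * U1 by
          rw [hspec1]
          rw [show U1ᴴ * (U1 * diagonal (fun i => (p i : ℂ)) * U1ᴴ) * U1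
              = (U1ᴴ * U1) * diagonal (fun i => (p i : ℂ)) * (U1ᴴ * U1) by
            simp only [mul_assoc], hU1, one_mul, mul_one]]
      rw [Matrix.trace_mul_cycle, hU1', one_mul, hρ1tr]
    rw [Matrix.trace_diagonal] at h1
    have := Complex.ofReal_sum Finset.univ p ▸ h1
    exact_mod_cast this
  have hq1 : ∑ j, q j = 1 := by
    have h1 : (diagonal (fun j => (q j : ℂ))).trace = 1 := by
      rw [show diagonal (fun j => (q j : ℂ)) = U2ᴴ * ρ2 * U2 by
          rw [hspec2]
          rw [show U2ᴴ * (U2 * diagonal (fun j => (q j : ℂ)) * U2ᴴ) * U2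
              = (U2ᴴ * U2) * diagonal (fun j => (q j : ℂ)) * (U2ᴴ * U2) by
            simp only [mul_assoc], hU2, one_mul, mul_one]]
      rw [Matrix.trace_mul_cycle, hU2', one_mul, hρ2tr]
    rw [Matrix.trace_diagonal] at h1
    have := Complex.ofReal_sum Finset.univ q ▸ h1
    exact_mod_cast this
  have hr1 : ρ1.rank = Fintype.card {i // p i ≠ 0} := hH1.rank_eq_card_non_zero_eigs
  have hr2 : ρ2.rank = Fintype.card {j // q j ≠ 0} := hH2.rank_eq_card_non_zero_eigs
  have e1 : {i // p i ≠ 0} ≃ Fin ρ1.rank := Fintype.equivFinOfCardEq hr1.symm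
  have e2 : {j // q j ≠ 0} ≃ Fin ρ2.rank := Fintype.equivFinOfCardEq hr2.symm
  obtain ⟨ρ0, h0psd, h0tr, h0t2, h0t1, h0rk⟩ :=
    core p q hρ1.eigenvalues_nonneg hρ2.eigenvalues_nonneg hp1 hq1 e1 e2 k
      (le_trans (le_max_left _ _) hk1) (le_trans (le_max_right _ _) hk1) hk2
  set V : Matrix (Fin n1 × Fin n2) (Fin n1 × Fin n2) ℂ := U1 ⊗ₖ U2 with hVdef
  have hV : Vᴴ * V = 1 := by
    rw [hVdef, kron_conjT, ← mul_kronecker_mul, hU1, hU2, one_kronecker_one]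
  have hVdet : IsUnit V.det ∧ IsUnit Vᴴ.det := by
    have h := congrArg Matrix.det hV
    rw [Matrix.det_mul, Matrix.det_one] at h
    exact ⟨IsUnit.of_mul_eq_one _ (by rw [mul_comm]; exact h), IsUnit.of_mul_eq_one _ h⟩
  refine ⟨V * ρ0 * Vᴴ, h0psd.mul_mul_conjTranspose_same V, ?_, ?_, ?_, ?_⟩
  · rw [Matrix.trace_mul_comm, ← mul_assoc, hV, one_mul, h0tr]
  · rw [hVdef, trace2_conj U1 U2 hU1 hU2, h0t2, ← hspec1]
  · rw [hVdef, trace1_conj U1 U2 hU1 hU2, h0t1, ← hspec2]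
  · rw [Matrix.rank_mul_eq_left_of_isUnit_det Vᴴ (V * ρ0) hVdet.2,
      Matrix.rank_mul_eq_right_of_isUnit_det V ρ0 hVdet.1, h0rk]
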